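/- arXiv:2002.01013 — 2 statements merged into one kernel-verified Lean document; each statement's English description precedes it below -/
import Mathlib

section
/- Let d ≥ 1, σ > 0, and let P be a Gaussian probability measure on ℝ^d with covariance matrix Σ whose maximum and minimum eigenvalues λ_max, λ_min satisfy λ_max < λ_min + σ²/2. Then ∫_{ℝ^d} Var_P(φ_σ(x−·)) / (P∗φ_σ(x)) dx < ∞. -/
open MeasureTheory ProbabilityTheory Real Filter
open scoped ENNReal NNReal RealInnerProductSpace

/-- The isotropic Gaussian density `φ_σ` on `ℝ^d`. -/
noncomputable def gaussDensity (d : ℕ) (σ : ℝ) (x : EuclideanSpace ℝ (Fin d)) : ℝ :=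
  (2 * π * σ ^ 2) ^ (-(d : ℝ) / 2) * Real.exp (-‖x‖ ^ 2 / (2 * σ ^ 2))

/-- A probability measure `P` on `ℝ^d` is `β`-sub-Gaussian if for `X ∼ P`,
`E[exp(α · (X − E[X]))] ≤ e^{β²‖α‖²/2}` for all `α ∈ ℝ^d`. -/
def IsSubGaussian (d : ℕ) (β : ℝ) (P : Measure (EuclideanSpace ℝ (Fin d))) : Prop :=
  ∀ α : EuclideanSpace ℝ (Fin d),
    ∫⁻ y, ENNReal.ofReal (Real.exp ⟪α, y - ∫ z, z ∂P⟫) ∂P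
      ≤ ENNReal.ofReal (Real.exp (β ^ 2 * ‖α‖ ^ 2 / 2))


section ChiSqAux

open Complex

lemma charGauss (μ : ℝ) (v : ℝ≥0) :
    ∫ s : ℝ, Complex.exp (-(s:ℂ) * Complex.I) ∂(gaussianReal μ v)
      = Complex.exp (-(μ:ℂ) * Complex.I - (v:ℝ) / 2) := by
  by_cases hv : v = 0
  · simp [hv, gaussianReal_zero_var, integral_dirac]
  · rw [gaussianReal_of_var_ne_zero _ hv]
    have hpdf : gaussianPDF μ v = fun x => ((Real.toNNReal (gaussianPDFReal μ v x) : ℝ≥0) : ℝ≥0∞) := by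
      ext x; simp [gaussianPDF, ENNReal.ofReal]
    rw [hpdf, integral_withDensity_eq_integral_smul
      ((measurable_gaussianPDFReal μ v).real_toNNReal)]
    have hv0 : (0:ℝ) < (v:ℝ) := by
      have := pos_iff_ne_zero.mpr hv; exact_mod_cast this
    have hstep : ∀ s : ℝ, (Real.toNNReal (gaussianPDFReal μ v s) : ℝ≥0) • Complex.exp (-(s:ℂ) * Complex.I)
        = ((Real.sqrt (2 * π * v))⁻¹ : ℂ) *
          Complex.exp ((-(1/(2*(v:ℝ))) : ℂ) * s^2 + ((μ/v : ℝ) - Complex.I) * s + (-(μ^2/(2*v)) : ℝ)) := by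
      intro s
      have hnn : 0 ≤ gaussianPDFReal μ v s := gaussianPDFReal_nonneg μ v s
      rw [NNReal.smul_def, Real.coe_toNNReal _ hnn]
      rw [gaussianPDFReal]
      have : Complex.exp ((-(1/(2*(v:ℝ))) : ℂ) * s^2 + ((μ/v : ℝ) - Complex.I) * s + (-(μ^2/(2*v)) : ℝ))
          = Complex.exp ((-(s-μ)^2/(2*v) : ℝ)) * Complex.exp (-(s:ℂ) * Complex.I) := by
        rw [← Complex.exp_add]
        congr 1
        push_cast
        field_simp
        ring
      rw [this, Complex.real_smul]
      push_cast [Complex.ofReal_exp]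
      ring
    simp_rw [hstep]
    rw [integral_const_mul, integral_cexp_quadratic (by simp [hv0] : (-(1/(2*(v:ℝ))) : ℂ).re < 0)]
    have h1 : ((π : ℂ) / -(-(1/(2*(v:ℝ))) : ℂ)) = ((2 * π * v : ℝ) : ℂ) := by
      push_cast; field_simp
    rw [h1]
    have h2 : ((2 * π * v : ℝ) : ℂ) ^ (1/2 : ℂ) = ((Real.sqrt (2 * π * v) : ℝ) : ℂ) := by
      rw [show (1/2 : ℂ) = ((1/2 : ℝ) : ℂ) by norm_num]
      rw [← Complex.ofReal_cpow (by positivity), Complex.ofReal_inj, ← Real.sqrt_eq_rpow]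
    rw [h2]
    have h3 : ((Real.sqrt (2 * π * v) : ℝ) : ℂ) ≠ 0 := by
      simp only [ne_eq, Complex.ofReal_eq_zero]
      positivity
    rw [← mul_assoc, inv_mul_cancel₀ h3, one_mul]
    congr 1
    have hvne : ((v:ℝ) : ℂ) ≠ 0 := by exact_mod_cast hv0.ne'
    have hI := Complex.I_sq
    push_cast
    field_simp
    ring_nf
    rw [Complex.I_sq]
    ring

variable {d : ℕ} {S : Matrix (Fin d) (Fin d) ℝ}

lemma quad_eq (hS : S.PosSemidef) (w : EuclideanSpace ℝ (Fin d)) :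
    dotProduct (WithLp.equiv 2 (Fin d → ℝ) w) (S.mulVec (WithLp.equiv 2 (Fin d → ℝ) w))
      = ∑ i, hS.1.eigenvalues i * (hS.1.eigenvectorBasis.repr w i)^2 := by
  classical
  set B := hS.1.eigenvectorBasis with hB
  set L := hS.1.eigenvalues with hL
  set T := Matrix.toEuclideanLin S with hT
  have h0 : dotProduct (WithLp.equiv 2 (Fin d → ℝ) w)
      (S.mulVec (WithLp.equiv 2 (Fin d → ℝ) w)) = ⟪w, T w⟫ := by
    simp [hT, Matrix.toEuclideanLin_apply, PiLp.inner_apply, dotProduct,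
      WithLp.equiv_apply, WithLp.equiv_symm_apply, RCLike.inner_apply]
    exact Finset.sum_congr rfl fun i _ => mul_comm _ _
  have hTB : ∀ j, T (B j) = L j • B j := by
    intro j
    have h := hS.1.mulVec_eigenvectorBasis j
    rw [hT, Matrix.toEuclideanLin_apply]
    ext i
    have h2 := congrFun h i
    simpa [WithLp.equiv_apply, WithLp.equiv_symm_apply] using h2
  have hw : T w = ∑ j, (B.repr w j * L j) • B j := by
    conv_lhs => rw [← B.sum_repr w]
    rw [map_sum]
    congr 1 with j
    rw [T.map_smul, hTB j, smul_smul]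
  rw [h0, hw, inner_sum]
  congr 1 with j
  rw [real_inner_smul_right, real_inner_comm, ← B.repr_apply_apply]
  ring


lemma conv_eq {d : ℕ} (P : Measure (EuclideanSpace ℝ (Fin d))) [IsProbabilityMeasure P]
    (m : EuclideanSpace ℝ (Fin d)) {S : Matrix (Fin d) (Fin d) ℝ} (hS : S.PosSemidef)
    (hGauss : ∀ α : EuclideanSpace ℝ (Fin d),
      P.map (fun y => ⟪α, y⟫) = gaussianReal ⟪α, m⟫
        (Real.toNNReal (dotProduct (WithLp.equiv 2 (Fin d → ℝ) α)
          (S.mulVec (WithLp.equiv 2 (Fin d → ℝ) α)))))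
    (t : ℝ) (ht : 0 < t) (x : EuclideanSpace ℝ (Fin d)) :
    ∫ y, rexp (-‖x - y‖^2 / (2*t)) ∂P
      = (∏ i, Real.sqrt (t / (t + hS.1.eigenvalues i))) *
        rexp (-∑ i, (hS.1.eigenvectorBasis.repr (x - m) i)^2 / (2*(t + hS.1.eigenvalues i))) := by
  classical
  set B := hS.1.eigenvectorBasis with hB
  set L := hS.1.eigenvalues with hLdef
  have hL : ∀ i, 0 ≤ L i := fun i => hS.eigenvalues_nonneg i
  set z := x - m with hz
  set c : Fin d → ℝ := fun i => B.repr z i with hc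
  have htL : ∀ i, 0 < t + L i := fun i => by have := hL i; linarith
  -- the Fourier representation of the Gaussian kernel
  have hb : (0:ℝ) < ((t:ℂ)/2).re := by simp; positivity
  set Cd : ℝ := (2*π/t) ^ ((d:ℝ)/2) with hCd
  have hCdpos : 0 < Cd := by
    apply Real.rpow_pos_of_pos; positivity
  have hCdC : ((Cd : ℝ) : ℂ) = ((2*π/t : ℝ) : ℂ) ^ ((d:ℂ)/2) := by
    rw [hCd, Complex.ofReal_cpow (by positivity)]
    push_cast
    ring_nf
  have hrep : ∀ u : EuclideanSpace ℝ (Fin d),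
      ∫ w : EuclideanSpace ℝ (Fin d), Complex.exp (-((t:ℂ)/2) * ‖w‖^2 + Complex.I * ⟪u, w⟫)
        = ((Cd : ℝ) : ℂ) * ((rexp (-‖u‖^2/(2*t)) : ℝ) : ℂ) := by
    intro u
    rw [GaussianFourier.integral_cexp_neg_mul_sq_norm_add hb Complex.I u]
    congr 1
    · rw [hCdC]
      congr 1
      · push_cast; field_simp
      · norm_num [finrank_euclideanSpace_fin]
    · rw [Complex.ofReal_exp]
      congr 1
      have : (Complex.I)^2 = -1 := Complex.I_sq
      rw [this]
      push_cast
      field_simp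
      ring
  -- definitions
  set F : EuclideanSpace ℝ (Fin d) → EuclideanSpace ℝ (Fin d) → ℂ :=
    fun y w => Complex.exp (-((t:ℂ)/2) * ‖w‖^2 + Complex.I * ⟪x - y, w⟫) with hF
  have hnormF : ∀ y w, ‖F y w‖ = rexp (-(t/2) * ‖w‖^2) := by
    intro y w
    have harg : -((t:ℂ)/2) * (‖w‖:ℂ)^2 + Complex.I * ((⟪x - y, w⟫ : ℝ) : ℂ)
        = ((-(t/2) * ‖w‖^2 : ℝ) : ℂ) + ((⟪x - y, w⟫ : ℝ) : ℂ) * Complex.I := by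
      push_cast; ring
    simp only [hF]
    rw [harg, Complex.norm_exp]
    congr 1
    simp only [Complex.add_re, Complex.ofReal_re, Complex.mul_re, Complex.I_re, Complex.I_im,
      Complex.ofReal_im]
    ring
  have hcontF : Continuous (Function.uncurry F) := by
    rw [hF]
    apply Complex.continuous_exp.comp
    apply Continuous.add
    · fun_prop
    · apply Continuous.mul continuous_const
      apply Complex.continuous_ofReal.comp
      exact Continuous.inner (by fun_prop) (by fun_prop)
  have hFub : Integrable (Function.uncurry F) (P.prod volume) := by
    rw [integrable_prod_iff hcontF.aestronglyMeasurable]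
    constructor
    · exact Eventually.of_forall fun y =>
        GaussianFourier.integrable_cexp_neg_mul_sq_norm_add hb Complex.I (x - y)
    · refine (integrable_const (∫ w : EuclideanSpace ℝ (Fin d), rexp (-(t/2) * ‖w‖^2))).congr
        (Eventually.of_forall fun y => ?_)
      exact integral_congr_ae (Eventually.of_forall fun w => (hnormF y w).symm)
  have hCdne : ((Cd : ℝ) : ℂ) ≠ 0 := by
    simp only [ne_eq, Complex.ofReal_eq_zero]; exact hCdpos.ne'
  -- reduce to a complex identity
  apply Complex.ofReal_injective
  rw [show ((∫ y, rexp (-‖x - y‖^2 / (2*t)) ∂P : ℝ) : ℂ)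
      = ∫ y, ((rexp (-‖x - y‖^2 / (2*t)) : ℝ) : ℂ) ∂P from integral_ofReal.symm]
  have hstep1 : ∀ y, ((rexp (-‖x - y‖^2/(2*t)) : ℝ) : ℂ)
      = ((Cd : ℝ) : ℂ)⁻¹ * ∫ w, F y w := by
    intro y
    simp only [hF]
    rw [hrep (x - y), ← mul_assoc, inv_mul_cancel₀ hCdne, one_mul]
  calc ∫ y, ((rexp (-‖x - y‖^2/(2*t)) : ℝ) : ℂ) ∂P
      = ∫ y, (((Cd : ℝ) : ℂ)⁻¹ * ∫ w, F y w) ∂P :=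
        integral_congr_ae (Eventually.of_forall hstep1)
    _ = ((Cd : ℝ) : ℂ)⁻¹ * ∫ y, (∫ w, F y w) ∂P := integral_const_mul _ _
    _ = ((Cd : ℝ) : ℂ)⁻¹ * ∫ w, (∫ y, F y w ∂P) := by rw [integral_integral_swap hFub]
    _ = _ := ?_
  -- compute the inner integral over P
  have hq : ∀ w : EuclideanSpace ℝ (Fin d),
      (0:ℝ) ≤ dotProduct (WithLp.equiv 2 (Fin d → ℝ) w)
        (S.mulVec (WithLp.equiv 2 (Fin d → ℝ) w)) := fun w => by
    simpa using hS.dotProduct_mulVec_nonneg (WithLp.equiv 2 (Fin d → ℝ) w)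
  have hinner : ∀ w, (∫ y, F y w ∂P)
      = Complex.exp (-((t:ℂ)/2) * ‖w‖^2 - ((∑ i, L i * (B.repr w i)^2 : ℝ) : ℂ)/2
          + Complex.I * ((⟪z, w⟫ : ℝ) : ℂ)) := by
    intro w
    have hsplit : ∀ y, F y w
        = Complex.exp (-((t:ℂ)/2) * ‖w‖^2 + Complex.I * ((⟪x, w⟫ : ℝ):ℂ))
          * Complex.exp (-((⟪w, y⟫ : ℝ):ℂ) * Complex.I) := by
      intro y
      simp only [hF]
      rw [← Complex.exp_add]
      congr 1
      have h5 : ⟪x - y, w⟫ = ⟪x, w⟫ - ⟪w, y⟫ := by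
        rw [inner_sub_left, real_inner_comm y w]
      rw [h5]
      push_cast
      ring
    rw [integral_congr_ae (Eventually.of_forall hsplit), integral_const_mul]
    have hφ : AEMeasurable (fun y : EuclideanSpace ℝ (Fin d) => ⟪w, y⟫) P :=
      (Continuous.inner continuous_const continuous_id).aemeasurable
    have h1 : ∫ y, Complex.exp (-((⟪w, y⟫ : ℝ):ℂ) * Complex.I) ∂P
        = ∫ s : ℝ, Complex.exp (-(s:ℂ) * Complex.I) ∂(P.map (fun y => ⟪w, y⟫)) := by
      rw [integral_map hφ]
      exact (Complex.continuous_exp.comp (by fun_prop)).aestronglyMeasurable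
    rw [h1, hGauss w, charGauss, ← Complex.exp_add]
    congr 1
    rw [Real.coe_toNNReal _ (hq w), quad_eq hS w]
    have h6 : ⟪z, w⟫ = ⟪x, w⟫ - ⟪w, m⟫ := by
      rw [hz, inner_sub_left, real_inner_comm m w]
    rw [h6, ← hB, ← hLdef]
    push_cast
    ring
  rw [integral_congr_ae (Eventually.of_forall hinner)]
  -- change of variables to the eigenbasis
  have hcov := ((B.measurePreserving_repr_symm).integral_comp
    (B.repr.symm.toHomeomorph.measurableEmbedding)
    (fun w => Complex.exp (-((t:ℂ)/2) * ‖w‖^2 - ((∑ i, L i * (B.repr w i)^2 : ℝ) : ℂ)/2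
          + Complex.I * ((⟪z, w⟫ : ℝ) : ℂ)))).symm
  rw [hcov]
  have hnormsq : ∀ v : EuclideanSpace ℝ (Fin d), ‖v‖^2 = ∑ i, (v i)^2 := by
    intro v
    rw [EuclideanSpace.norm_eq, Real.sq_sqrt]
    · simp [_root_.sq_abs]
    · positivity
  have hsimp : ∀ v : EuclideanSpace ℝ (Fin d),
      Complex.exp (-((t:ℂ)/2) * ‖B.repr.symm v‖^2
          - ((∑ i, L i * (B.repr (B.repr.symm v) i)^2 : ℝ) : ℂ)/2
          + Complex.I * ((⟪z, B.repr.symm v⟫ : ℝ) : ℂ))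
        = Complex.exp (-∑ i, (((t + L i)/2 : ℝ) : ℂ) * ((v i : ℝ) : ℂ)^2
            + ∑ i, (Complex.I * ((c i : ℝ) : ℂ)) * ((v i : ℝ) : ℂ)) := by
    intro v
    congr 1
    rw [LinearIsometryEquiv.norm_map, LinearIsometryEquiv.apply_symm_apply]
    have h7 : ⟪z, B.repr.symm v⟫ = ∑ i, c i * v i := by
      rw [← LinearIsometryEquiv.inner_map_map B.repr, LinearIsometryEquiv.apply_symm_apply]
      simp [PiLp.inner_apply, RCLike.inner_apply, hc]
      exact Finset.sum_congr rfl fun i _ => mul_comm _ _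
    rw [h7]
    have h8 : ((‖v‖ : ℝ) : ℂ)^2 = ((∑ i, (v i)^2 : ℝ) : ℂ) := by
      rw [← hnormsq v]; push_cast; ring
    rw [h8]
    push_cast
    simp only [Finset.mul_sum, Finset.sum_div, ← Finset.sum_neg_distrib,
      ← Finset.sum_add_distrib, ← Finset.sum_sub_distrib]
    exact Finset.sum_congr rfl fun i _ => by ring
  rw [integral_congr_ae (Eventually.of_forall hsimp)]
  -- move to the product space
  have hpi := (EuclideanSpace.volume_preserving_symm_measurableEquiv_toLp (Fin d)).symm
  rw [← hpi.integral_comp (MeasurableEquiv.measurableEmbedding _)]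
  have hcoords : ∀ u : Fin d → ℝ,
      Complex.exp (-∑ i, (((t + L i)/2 : ℝ) : ℂ)
            * ((((MeasurableEquiv.toLp 2 (Fin d → ℝ)).symm.symm u) i : ℝ) : ℂ)^2
          + ∑ i, (Complex.I * ((c i : ℝ) : ℂ))
            * ((((MeasurableEquiv.toLp 2 (Fin d → ℝ)).symm.symm u) i : ℝ) : ℂ))
        = Complex.exp (-∑ i, (((t + L i)/2 : ℝ) : ℂ) * ((u i : ℝ) : ℂ)^2
            + ∑ i, (Complex.I * ((c i : ℝ) : ℂ)) * ((u i : ℝ) : ℂ)) := by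
    intro u
    simp [MeasurableEquiv.symm_symm]
  rw [show (fun u : Fin d → ℝ =>
      (fun v : EuclideanSpace ℝ (Fin d) =>
        Complex.exp (-∑ i, (((t + L i)/2 : ℝ) : ℂ) * ((v i : ℝ) : ℂ)^2
          + ∑ i, (Complex.I * ((c i : ℝ) : ℂ)) * ((v i : ℝ) : ℂ)))
        ((MeasurableEquiv.toLp 2 (Fin d → ℝ)).symm.symm u))
      = fun u : Fin d → ℝ =>
        Complex.exp (-∑ i, (((t + L i)/2 : ℝ) : ℂ) * ((u i : ℝ) : ℂ)^2
          + ∑ i, (Complex.I * ((c i : ℝ) : ℂ)) * ((u i : ℝ) : ℂ)) from funext hcoords]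
  have hbs : ∀ i : Fin d, 0 < ((((t + L i)/2 : ℝ) : ℂ)).re := by
    intro i; simp only [Complex.ofReal_re]; linarith [htL i]
  rw [GaussianFourier.integral_cexp_neg_sum_mul_add hbs (fun i => Complex.I * ((c i : ℝ) : ℂ))]
  -- per-factor simplification
  have hfac : ∀ i : Fin d,
      ((π : ℂ) / (((t + L i)/2 : ℝ) : ℂ)) ^ (1/2 : ℂ)
        * Complex.exp ((Complex.I * ((c i : ℝ):ℂ))^2 / (4 * (((t + L i)/2 : ℝ) : ℂ)))
      = (((Real.sqrt (2*π/(t + L i)) * rexp (-((c i)^2/(2*(t+L i)))) : ℝ)) : ℂ) := by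
    intro i
    have h1 : ((π:ℂ) / (((t + L i)/2 : ℝ):ℂ)) = ((2*π/(t + L i) : ℝ) : ℂ) := by
      have hne : (((t + L i) : ℝ) : ℂ) ≠ 0 := by exact_mod_cast (htL i).ne'
      push_cast
      field_simp
    have hpos : (0:ℝ) ≤ 2*π/(t + L i) := le_of_lt (div_pos (by positivity) (htL i))
    have h2 : ((2*π/(t + L i) : ℝ) : ℂ) ^ (1/2 : ℂ) = ((Real.sqrt (2*π/(t+L i)) : ℝ) : ℂ) := by
      rw [show (1/2 : ℂ) = ((1/2 : ℝ) : ℂ) by norm_num]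
      rw [← Complex.ofReal_cpow hpos, Complex.ofReal_inj, ← Real.sqrt_eq_rpow]
    have h3 : (Complex.I * ((c i : ℝ):ℂ))^2 / (4 * (((t + L i)/2 : ℝ) : ℂ))
        = ((-((c i)^2/(2*(t+L i))) : ℝ) : ℂ) := by
      have h4 : (4:ℂ) * (((t + L i)/2 : ℝ) : ℂ) = 2 * (((t + L i) : ℝ) : ℂ) := by
        push_cast; ring
      rw [mul_pow, Complex.I_sq, h4]
      push_cast
      ring
    rw [h1, h2, h3, ← Complex.ofReal_exp, ← Complex.ofReal_mul]
  rw [Finset.prod_congr rfl (fun i _ => hfac i), ← Complex.ofReal_prod,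
    ← Complex.ofReal_inv, ← Complex.ofReal_mul, Complex.ofReal_inj]
  -- now a purely real computation
  have hexp : ∏ i : Fin d, rexp (-((c i)^2/(2*(t+L i))))
      = rexp (-∑ i, (c i)^2/(2*(t+L i))) := by
    rw [← Real.exp_sum]
    congr 1
    rw [← Finset.sum_neg_distrib]
  have hCdprod : Cd = ∏ _i : Fin d, Real.sqrt (2*π/t) := by
    rw [Finset.prod_const, Finset.card_univ, Fintype.card_fin, hCd,
      show ((d:ℝ)/2) = (1/2 : ℝ) * d by ring,
      Real.rpow_mul (by positivity), Real.rpow_natCast]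
    congr 1
    rw [← Real.sqrt_eq_rpow]
  have hsqrt : ∀ i : Fin d, Real.sqrt (2*π/(t+L i)) / Real.sqrt (2*π/t)
      = Real.sqrt (t/(t+L i)) := by
    intro i
    rw [← Real.sqrt_div (le_of_lt (div_pos (by positivity) (htL i)))]
    congr 1
    have h1 : t + L i ≠ 0 := (htL i).ne'
    have h2 : t ≠ 0 := ht.ne'
    have h3 : π ≠ 0 := Real.pi_ne_zero
    field_simp
  have hconst : Cd⁻¹ * ∏ i : Fin d, Real.sqrt (2*π/(t+L i))
      = ∏ i : Fin d, Real.sqrt (t/(t+L i)) := by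
    calc Cd⁻¹ * ∏ i : Fin d, Real.sqrt (2*π/(t+L i))
        = (∏ i : Fin d, Real.sqrt (2*π/(t+L i))) / Cd := by
          rw [inv_mul_eq_div, div_eq_div_iff hCdpos.ne' hCdpos.ne'] <;> ring_nf
      _ = (∏ i : Fin d, Real.sqrt (2*π/(t+L i))) / (∏ _i : Fin d, Real.sqrt (2*π/t)) := by
          rw [← hCdprod]
      _ = ∏ i : Fin d, (Real.sqrt (2*π/(t+L i)) / Real.sqrt (2*π/t)) :=
          (Finset.prod_div_distrib _ _).symm
      _ = ∏ i : Fin d, Real.sqrt (t/(t+L i)) := Finset.prod_congr rfl fun i _ => hsqrt i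
  rw [Finset.prod_mul_distrib, hexp, ← mul_assoc, hconst]

end ChiSqAux

/-- **χ² integrability condition for Gaussian `P`:** if `P` is a Gaussian measure on `ℝ^d`
with covariance matrix `S` whose eigenvalues satisfy `λ_max < λ_min + σ²/2`, then
`∫ Var_P(φ_σ(x−·))/(P∗φ_σ(x)) dx < ∞`. -/
theorem chiSq_condition_of_gaussian
    (d : ℕ) (hd : 1 ≤ d) (σ : ℝ) (hσ : 0 < σ)
    (P : Measure (EuclideanSpace ℝ (Fin d))) [IsProbabilityMeasure P]
    (m : EuclideanSpace ℝ (Fin d)) (S : Matrix (Fin d) (Fin d) ℝ)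
    (hS : S.PosSemidef)
    (hGauss : ∀ α : EuclideanSpace ℝ (Fin d),
      P.map (fun y => ⟪α, y⟫) = gaussianReal ⟪α, m⟫
        (Real.toNNReal (dotProduct (WithLp.equiv 2 (Fin d → ℝ) α)
          (S.mulVec (WithLp.equiv 2 (Fin d → ℝ) α)))))
    (heig : (⨆ i, hS.1.eigenvalues i) < (⨅ i, hS.1.eigenvalues i) + σ ^ 2 / 2) :
    ∫⁻ x, ENNReal.ofReal
        (variance (fun y => gaussDensity d σ (x - y)) P / ∫ y, gaussDensity d σ (x - y) ∂P)
      < ⊤ := by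
  classical
  haveI : NeZero d := ⟨by omega⟩
  set L := hS.1.eigenvalues with hLdef
  set B := hS.1.eigenvectorBasis with hB
  have hL : ∀ i, 0 ≤ L i := fun i => hS.eigenvalues_nonneg i
  set lmax := ⨆ i, L i with hlmax
  set lmin := ⨅ i, L i with hlmin
  have hbddA : BddAbove (Set.range L) := (Set.finite_range L).bddAbove
  have hbddB : BddBelow (Set.range L) := (Set.finite_range L).bddBelow
  have hLle : ∀ i, L i ≤ lmax := fun i => le_ciSup hbddA i
  have hLge : ∀ i, lmin ≤ L i := fun i => ciInf_le hbddB i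
  have hlmin0 : 0 ≤ lmin := le_ciInf hL
  have hlmax0 : 0 ≤ lmax := le_trans (hL ⟨0, by omega⟩) (hLle ⟨0, by omega⟩)
  have hσ2 : (0:ℝ) < σ^2 := by positivity
  set a : ℝ := (σ^2 + 2*lmax)⁻¹ with ha
  set b : ℝ := (2*(σ^2 + lmin))⁻¹ with hb'
  have hapos : 0 < σ^2 + 2*lmax := by linarith
  have hbpos : 0 < 2*(σ^2 + lmin) := by linarith
  have hba : b < a := by
    rw [ha, hb']
    apply inv_strictAnti₀ hapos
    linarith [heig]
  set ε : ℝ := a - b with hε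
  have hεpos : 0 < ε := by simp [hε]; linarith
  set Kσ : ℝ := (2 * π * σ ^ 2) ^ (-(d : ℝ) / 2) with hKσ
  have hKpos : 0 < Kσ := Real.rpow_pos_of_pos (by positivity) _
  set A₀ : ℝ := ∏ _i : Fin d, Real.sqrt (σ^2/(σ^2 + lmax)) with hA₀
  have hA₀pos : 0 < A₀ := Finset.prod_pos fun i _ => Real.sqrt_pos.mpr (by positivity)
  set C : ℝ := Kσ / A₀ with hC
  -- the norm-sum identity
  have hsumsq : ∀ z : EuclideanSpace ℝ (Fin d), ∑ i, (B.repr z i)^2 = ‖z‖^2 := by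
    intro z
    have h1 : ‖B.repr z‖ = ‖z‖ := B.repr.norm_map z
    rw [← h1, EuclideanSpace.norm_eq, Real.sq_sqrt (by positivity)]
    simp [_root_.sq_abs]
  -- upper bound for the second-moment convolution
  have hI2 : ∀ x : EuclideanSpace ℝ (Fin d),
      ∫ y, rexp (-‖x - y‖^2 / (2*(σ^2/2))) ∂P ≤ rexp (-(a * ‖x - m‖^2)) := by
    intro x
    rw [conv_eq P m hS hGauss (σ^2/2) (by positivity) x]
    have h1 : (∏ i, Real.sqrt ((σ^2/2) / ((σ^2/2) + L i))) ≤ 1 := by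
      apply Finset.prod_le_one
      · intro i _; positivity
      · intro i _
        rw [show (1:ℝ) = Real.sqrt 1 by simp]
        apply Real.sqrt_le_sqrt
        rw [div_le_one (by have := hL i; positivity)]
        linarith [hL i]
    have h2 : rexp (-∑ i, (B.repr (x - m) i)^2 / (2*((σ^2/2) + L i)))
        ≤ rexp (-(a * ‖x - m‖^2)) := by
      apply Real.exp_le_exp.mpr
      rw [neg_le_neg_iff]
      rw [← hsumsq (x - m), Finset.mul_sum]
      apply Finset.sum_le_sum
      intro i _
      rw [ha, inv_mul_eq_div]
      apply div_le_div_of_nonneg_left (sq_nonneg _) (by have := hL i; positivity)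
      linarith [hLle i]
    calc (∏ i, Real.sqrt ((σ^2/2) / ((σ^2/2) + L i))) * rexp (-∑ i, (B.repr (x - m) i)^2 / (2*((σ^2/2) + L i)))
        ≤ 1 * rexp (-(a * ‖x - m‖^2)) := by
          apply mul_le_mul h1 h2 (Real.exp_nonneg _) zero_le_one
      _ = rexp (-(a * ‖x - m‖^2)) := one_mul _
  -- lower bound for the convolution
  have hI1 : ∀ x : EuclideanSpace ℝ (Fin d),
      A₀ * rexp (-(b * ‖x - m‖^2)) ≤ ∫ y, rexp (-‖x - y‖^2 / (2*σ^2)) ∂P := by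
    intro x
    rw [conv_eq P m hS hGauss (σ^2) (by positivity) x]
    have h1 : A₀ ≤ ∏ i, Real.sqrt (σ^2 / (σ^2 + L i)) := by
      rw [hA₀]
      apply Finset.prod_le_prod
      · intro i _; positivity
      · intro i _
        apply Real.sqrt_le_sqrt
        apply div_le_div_of_nonneg_left hσ2.le (by have := hL i; positivity)
        linarith [hLle i]
    have h2 : rexp (-(b * ‖x - m‖^2))
        ≤ rexp (-∑ i, (B.repr (x - m) i)^2 / (2*(σ^2 + L i))) := by
      apply Real.exp_le_exp.mpr
      rw [neg_le_neg_iff]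
      rw [← hsumsq (x - m), Finset.mul_sum]
      apply Finset.sum_le_sum
      intro i _
      rw [hb', inv_mul_eq_div]
      apply div_le_div_of_nonneg_left (sq_nonneg _) (by have := hL i; positivity)
      linarith [hLge i]
    exact mul_le_mul h1 h2 (Real.exp_nonneg _) (Finset.prod_nonneg fun i _ => Real.sqrt_nonneg _)
  -- identification of the denominator
  have hden : ∀ x : EuclideanSpace ℝ (Fin d),
      ∫ y, gaussDensity d σ (x - y) ∂P = Kσ * ∫ y, rexp (-‖x - y‖^2 / (2*σ^2)) ∂P := by
    intro x
    rw [← integral_const_mul]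
    rfl
  have hdenpos : ∀ x : EuclideanSpace ℝ (Fin d),
      0 < ∫ y, gaussDensity d σ (x - y) ∂P := by
    intro x
    rw [hden x]
    apply mul_pos hKpos
    calc (0:ℝ) < A₀ * rexp (-(b * ‖x - m‖^2)) := by positivity
      _ ≤ _ := hI1 x
  -- variance bound
  have hcontg : ∀ x : EuclideanSpace ℝ (Fin d),
      Continuous fun y : EuclideanSpace ℝ (Fin d) => gaussDensity d σ (x - y) := by
    intro x
    unfold gaussDensity
    fun_prop
  have hvar : ∀ x : EuclideanSpace ℝ (Fin d),
      variance (fun y => gaussDensity d σ (x - y)) P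
        ≤ Kσ^2 * ∫ y, rexp (-‖x - y‖^2 / (2*(σ^2/2))) ∂P := by
    intro x
    calc variance (fun y => gaussDensity d σ (x - y)) P
        ≤ ∫ y, ((fun y => gaussDensity d σ (x - y))^2) y ∂P :=
          variance_le_expectation_sq (hcontg x).aestronglyMeasurable
      _ = ∫ y, Kσ^2 * rexp (-‖x - y‖^2 / (2*(σ^2/2))) ∂P := by
          apply integral_congr_ae
          apply Eventually.of_forall
          intro y
          simp only [Pi.pow_apply]
          unfold gaussDensity
          rw [mul_pow, ← hKσ, pow_two (rexp _), ← Real.exp_add]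
          congr 1
          field_simp
          ring
      _ = Kσ^2 * ∫ y, rexp (-‖x - y‖^2 / (2*(σ^2/2))) ∂P := integral_const_mul _ _
  -- pointwise bound on the integrand
  have hpt : ∀ x : EuclideanSpace ℝ (Fin d),
      variance (fun y => gaussDensity d σ (x - y)) P / ∫ y, gaussDensity d σ (x - y) ∂P
        ≤ C * rexp (-(ε * ‖x - m‖^2)) := by
    intro x
    rw [div_le_iff₀ (hdenpos x)]
    have e1 : variance (fun y => gaussDensity d σ (x - y)) P
        ≤ Kσ^2 * rexp (-(a * ‖x - m‖^2)) :=
      le_trans (hvar x) (mul_le_mul_of_nonneg_left (hI2 x) (by positivity))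
    have e2 : Kσ^2 * rexp (-(a * ‖x - m‖^2))
        = (C * rexp (-(ε * ‖x - m‖^2))) * (Kσ * (A₀ * rexp (-(b * ‖x - m‖^2)))) := by
      have hee : rexp (-(ε * ‖x - m‖^2)) * rexp (-(b * ‖x - m‖^2))
          = rexp (-(a * ‖x - m‖^2)) := by
        rw [← Real.exp_add]
        congr 1
        rw [hε]
        ring
      rw [hC, ← hee]
      field_simp
    have e3 : (C * rexp (-(ε * ‖x - m‖^2))) * (Kσ * (A₀ * rexp (-(b * ‖x - m‖^2))))
        ≤ (C * rexp (-(ε * ‖x - m‖^2))) * ∫ y, gaussDensity d σ (x - y) ∂P := by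
      apply mul_le_mul_of_nonneg_left _ (by positivity)
      rw [hden x]
      exact mul_le_mul_of_nonneg_left (hI1 x) hKpos.le
    calc variance (fun y => gaussDensity d σ (x - y)) P
        ≤ Kσ^2 * rexp (-(a * ‖x - m‖^2)) := e1
      _ = _ := e2
      _ ≤ _ := e3
  -- integrability of the Gaussian majorant
  have hmaj : Integrable (fun v : EuclideanSpace ℝ (Fin d) => C * rexp (-(ε * ‖v‖^2))) := by
    apply Integrable.const_mul
    have h0 := (GaussianFourier.integrable_cexp_neg_mul_sq_norm_add
      (V := EuclideanSpace ℝ (Fin d)) (b := (ε:ℂ)) (by simpa using hεpos) 0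
      (0 : EuclideanSpace ℝ (Fin d))).norm
    refine h0.congr (Eventually.of_forall fun v => ?_)
    show ‖Complex.exp (-(ε:ℂ) * (‖v‖:ℂ)^2
        + 0 * ((⟪(0 : EuclideanSpace ℝ (Fin d)), v⟫ : ℝ) : ℂ))‖ = rexp (-(ε * ‖v‖^2))
    have harg : -(ε:ℂ) * (‖v‖:ℂ)^2 + 0 * ((⟪(0 : EuclideanSpace ℝ (Fin d)), v⟫ : ℝ) : ℂ)
        = ((-(ε * ‖v‖^2) : ℝ) : ℂ) := by push_cast; ring
    rw [harg, Complex.norm_exp, Complex.ofReal_re]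
  -- conclusion
  calc ∫⁻ x, ENNReal.ofReal
        (variance (fun y => gaussDensity d σ (x - y)) P / ∫ y, gaussDensity d σ (x - y) ∂P)
      ≤ ∫⁻ x, ENNReal.ofReal (C * rexp (-(ε * ‖x - m‖^2))) := by
        apply lintegral_mono
        intro x
        exact ENNReal.ofReal_le_ofReal (hpt x)
    _ = ∫⁻ v, ENNReal.ofReal (C * rexp (-(ε * ‖v‖^2))) :=
        lintegral_sub_right_eq_self (fun v => ENNReal.ofReal (C * rexp (-(ε * ‖v‖^2)))) m
    _ ≤ ∫⁻ v, (‖C * rexp (-(ε * ‖v‖^2))‖₊ : ℝ≥0∞) := by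
        apply lintegral_mono
        intro v
        exact Real.ofReal_le_enorm _
    _ < ⊤ := hmaj.2
end

section
/- Let d ≥ 1, σ > 0, and let P be a Borel probability measure on ℝ^d with X ~ P. Then for every x ∈ ℝ^d, Var_P(φ_σ(x−·)) ≤ (2πσ²)^{−d} ( e^{−‖x‖²/(4σ²)} + P(‖X‖ > ‖x‖/2) ). -/
open MeasureTheory ProbabilityTheory Real Filter
open scoped ENNReal NNReal

/-- **Pointwise variance bound:**
`Var_P(φ_σ(x−·)) ≤ (2πσ²)^{−d} (e^{−‖x‖²/(4σ²)} + P(‖X‖ > ‖x‖/2))`. -/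
theorem variance_gaussDensity_pointwise_bound
    (d : ℕ) (hd : 1 ≤ d) (σ : ℝ) (hσ : 0 < σ)
    (P : Measure (EuclideanSpace ℝ (Fin d))) [IsProbabilityMeasure P]
    (x : EuclideanSpace ℝ (Fin d)) :
    variance (fun y => gaussDensity d σ (x - y)) P
      ≤ (2 * π * σ ^ 2) ^ (-(d : ℝ)) *
        (Real.exp (-‖x‖ ^ 2 / (4 * σ ^ 2)) + (P {y | ‖y‖ > ‖x‖ / 2}).toReal) := by
  have hb : (0:ℝ) < 2 * π * σ ^ 2 := by positivity
  set K : ℝ := (2 * π * σ ^ 2) ^ (-(d : ℝ)) with hK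
  have hK0 : 0 < K := Real.rpow_pos_of_pos hb _
  set E0 : ℝ := Real.exp (-‖x‖ ^ 2 / (4 * σ ^ 2)) with hE0
  have hE0pos : 0 < E0 := Real.exp_pos _
  set A : Set (EuclideanSpace ℝ (Fin d)) := {y | ‖y‖ > ‖x‖ / 2} with hA
  have hAm : MeasurableSet A := measurableSet_lt measurable_const measurable_norm
  have hfc : Continuous (fun y => gaussDensity d σ (x - y)) := by
    unfold gaussDensity; fun_prop
  have hsq : ∀ y, (gaussDensity d σ (x - y)) ^ 2
      = K * Real.exp (-‖x - y‖ ^ 2 / σ ^ 2) := by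
    intro y
    unfold gaussDensity
    rw [mul_pow, sq (Real.exp _), ← Real.exp_add, sq, ← Real.rpow_add hb]
    congr 2
    · ring
    · field_simp; ring
  set h : EuclideanSpace ℝ (Fin d) → ℝ :=
    fun y => K * (E0 + A.indicator (fun _ => (1:ℝ)) y) with hh
  have hind : Integrable (A.indicator (fun _ => (1:ℝ))) P := by
    rw [integrable_indicator_iff hAm]
    exact integrableOn_const (measure_ne_top _ _)
  have hhint : Integrable h P := (((integrable_const E0).add hind).const_mul K)
  have hle : ∀ y, (gaussDensity d σ (x - y)) ^ 2 ≤ h y := by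
    intro y
    rw [hsq y]
    by_cases hy : y ∈ A
    · have h1 : Real.exp (-‖x - y‖ ^ 2 / σ ^ 2) ≤ 1 := by
        apply Real.exp_le_one_iff.2
        rw [neg_div]
        exact neg_nonpos.2 (by positivity)
      simp only [hh, Set.indicator_of_mem hy]
      nlinarith
    · have hy' : ‖y‖ ≤ ‖x‖ / 2 := not_lt.1 hy
      have hnx : ‖x‖ / 2 ≤ ‖x - y‖ := by
        have := norm_sub_norm_le x y
        linarith
      have hsq' : ‖x‖ ^ 2 / 4 ≤ ‖x - y‖ ^ 2 := by
        nlinarith [norm_nonneg x, norm_nonneg (x - y)]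
      have hexp : Real.exp (-‖x - y‖ ^ 2 / σ ^ 2) ≤ E0 := by
        apply Real.exp_le_exp.2
        rw [div_le_div_iff₀ (by positivity) (by positivity)]
        nlinarith [sq_nonneg σ]
      simp only [hh, Set.indicator_of_notMem hy, add_zero]
      nlinarith
  have hintf2 : Integrable (fun y => (gaussDensity d σ (x - y)) ^ 2) P :=
    hhint.mono' ((hfc.pow 2).aestronglyMeasurable)
      (ae_of_all _ fun y => by
        rw [Real.norm_eq_abs, abs_of_nonneg (by positivity)]; exact hle y)
  calc variance (fun y => gaussDensity d σ (x - y)) P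
      ≤ ∫ y, (gaussDensity d σ (x - y)) ^ 2 ∂P := by
        simpa using variance_le_expectation_sq (μ := P) hfc.aestronglyMeasurable
    _ ≤ ∫ y, h y ∂P := integral_mono hintf2 hhint hle
    _ = K * (E0 + (P A).toReal) := by
        simp only [hh]
        rw [integral_const_mul, integral_add (integrable_const _) hind,
          integral_const, integral_indicator_const (1:ℝ) hAm]
        simp [measureReal_def]
end
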